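/- Let a > 1 and let h : ℕ → ℕ be a function which is not the binomial function n ↦ C(a+n-1, n). Suppose h = h_0 + h_1[-1] + ⋯ + h_r[-r] = g_0 + g_1[-1] + ⋯ + g_{r'}[-r'] are two decompositions with r, r' ≥ 1 and Macaulay functions h_0, …, h_r and g_0, …, g_{r'} each satisfying: h_i(1) = a-1 for 0 ≤ i < r, h_r(1) ≤ a-1, and for 1 ≤ i ≤ r either s_0(h_{i-1}) = ∞ or h_i has finite support with sup h_i < s_0(h_{i-1}) - 1 (and the analogous conditions for the g_i). Then r = r' and h_i = g_i for all 0 ≤ i ≤ r. -/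

import Mathlib

open scoped BigOperators

/-- The largest `m` with `C(m, i) ≤ α` (for `i ≥ 1`, `α ≥ 1` this is the leading
exponent of the `i`-binomial development of `α`). -/
noncomputable def lead (α i : ℕ) : ℕ := sSup {m : ℕ | Nat.choose m i ≤ α}

/-- `binUp i α = α^{<i>}`, defined through the `i`-binomial development of `α`:
if `α = C(m_i, i) + C(m_{i-1}, i-1) + ⋯ + C(m_j, j)` with
`m_i > m_{i-1} > ⋯ > m_j ≥ j ≥ 1`, then
`binUp i α = C(m_i+1, i+1) + C(m_{i-1}+1, i) + ⋯ + C(m_j+1, j+1)`, and `binUp i 0 = 0`. -/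
noncomputable def binUp : ℕ → ℕ → ℕ
  | 0, _ => 0
  | (i+1), α =>
    if α = 0 then 0
    else Nat.choose (lead α (i+1) + 1) (i+2) +
      binUp i (α - Nat.choose (lead α (i+1)) (i+1))

/-- `h : ℕ → ℕ` is a Macaulay function if `h 0 = 1` and `h (i+1) ≤ (h i)^{<i>}`
for every `i ≥ 1`. -/
def MacaulayFun (h : ℕ → ℕ) : Prop :=
  h 0 = 1 ∧ ∀ i, 1 ≤ i → h (i+1) ≤ binUp i (h i)

/-- `s₀(h) = inf {n | h n < C(a+n-1, n)} ∈ ℕ ∪ {∞}` for a Macaulay function of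
type `a = h 1`. -/
noncomputable def s0M (h : ℕ → ℕ) : ℕ∞ :=
  sInf {x : ℕ∞ | ∃ n : ℕ, x = (n : ℕ∞) ∧ h n < Nat.choose (h 1 + n - 1) n}

/-- `sup f = max {n | f n ≠ 0}` for a finitely supported `f : ℕ → ℕ`. -/
noncomputable def supN (f : ℕ → ℕ) : ℕ := sSup {n : ℕ | f n ≠ 0}

/-- A character: a finitely supported `γ : ℤ → ℤ` with `∑ γ(n) = 0`. -/
def IsChar (γ : ℤ → ℤ) : Prop :=
  (Function.support γ).Finite ∧ ∑ᶠ n, γ n = 0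

/-- `s₀(γ) = inf {n ≥ 0 | γ n ≠ -1}`. -/
noncomputable def s0C (γ : ℤ → ℤ) : ℤ := sInf {n : ℤ | 0 ≤ n ∧ γ n ≠ -1}

/-- A positive character: `γ(n) = 0` for `n < 0`, `γ(0) = -1` and `γ(n) ≥ 0`
for every `n ≥ s₀(γ)`. -/
def PosChar (γ : ℤ → ℤ) : Prop :=
  IsChar γ ∧ (∀ n < 0, γ n = 0) ∧ γ 0 = -1 ∧ ∀ n : ℤ, s0C γ ≤ n → 0 ≤ γ n

/-- `sup γ = max {n | γ n ≠ 0}` for a finitely supported `γ : ℤ → ℤ`. -/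
noncomputable def supZ (γ : ℤ → ℤ) : ℤ := sSup {n : ℤ | γ n ≠ 0}

/-- `IsDev α i j m` says that `α = C(m_i, i) + C(m_{i-1}, i-1) + ⋯ + C(m_j, j)`
with `m_i > m_{i-1} > ⋯ > m_j ≥ j ≥ 1` is the `i`-binomial development of `α`. -/
def IsDev (α i j : ℕ) (m : ℕ → ℕ) : Prop :=
  1 ≤ j ∧ j ≤ i ∧ j ≤ m j ∧ (∀ k, j ≤ k → k < i → m k < m (k+1)) ∧
    α = ∑ k ∈ Finset.Icc j i, Nat.choose (m k) k

lemma choose_lower (k i : ℕ) : k ≤ Nat.choose k (i+1) + i := by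
  induction k with
  | zero => simp
  | succ k ih =>
    rcases le_or_gt i k with h | h
    · have h1 : 1 ≤ Nat.choose k i := Nat.choose_pos h
      have h2 : Nat.choose (k+1) (i+1) = Nat.choose k i + Nat.choose k (i+1) := Nat.choose_succ_succ k i
      omega
    · omega

lemma lead_bddAbove (α i : ℕ) (hi : 1 ≤ i) : BddAbove {m : ℕ | Nat.choose m i ≤ α} := by
  obtain ⟨j, rfl⟩ := Nat.exists_eq_add_of_le hi
  refine ⟨α + j + 1, fun m hm => ?_⟩
  simp only [Set.mem_setOf_eq] at hm
  have h1j : 1 + j = j + 1 := by omega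
  rw [h1j] at hm
  have := choose_lower m j
  omega

lemma lead_mem (α i : ℕ) (hi : 1 ≤ i) : Nat.choose (lead α i) i ≤ α := by
  have h0 : (0:ℕ) ∈ {m : ℕ | Nat.choose m i ≤ α} := by
    simp [Nat.choose_eq_zero_of_lt hi]
  have := Nat.sSup_mem ⟨0, h0⟩ (lead_bddAbove α i hi)
  exact this

lemma lead_lt (α i : ℕ) (hi : 1 ≤ i) : α < Nat.choose (lead α i + 1) i := by
  by_contra hcon
  push_neg at hcon
  have : lead α i + 1 ≤ lead α i := le_csSup (lead_bddAbove α i hi) hcon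
  omega

lemma lead_lt_of_lt (α i m : ℕ) (hi : 1 ≤ i) (h : α < Nat.choose m i) : lead α i < m := by
  by_contra hcon
  push_neg at hcon
  have := Nat.choose_le_choose i hcon
  have := lead_mem α i hi
  omega

lemma binUp_zero (i : ℕ) : binUp i 0 = 0 := by
  cases i <;> simp [binUp]

lemma binUp_zero' (α : ℕ) : binUp 0 α = 0 := rfl

lemma binUp_succ (i α : ℕ) (hα : α ≠ 0) :
    binUp (i+1) α = Nat.choose (lead α (i+1) + 1) (i+2) +
      binUp i (α - Nat.choose (lead α (i+1)) (i+1)) := by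
  rw [binUp]; simp [hα]

lemma pos_of_choose_pos {m i : ℕ} (h : 0 < Nat.choose m i) : i ≤ m := by
  by_contra hc
  push_neg at hc
  rw [Nat.choose_eq_zero_of_lt hc] at h
  omega

lemma binUp_lt : ∀ i α m, α < Nat.choose m (i+1) → binUp (i+1) α < Nat.choose (m+1) (i+2) := by
  intro i
  induction i with
  | zero =>
    intro α m h
    simp only [show (0:ℕ)+1 = 1 from rfl, show (0:ℕ)+2 = 2 from rfl] at h ⊢
    rcases Nat.eq_zero_or_pos α with rfl | hα
    · rw [binUp_zero]
      exact Nat.choose_pos (by have := pos_of_choose_pos h; omega)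
    · have hL1 : Nat.choose (lead α 1) 1 ≤ α := lead_mem α 1 (by omega)
      have hL2 : α < Nat.choose (lead α 1 + 1) 1 := lead_lt α 1 (by omega)
      have hLm : lead α 1 < m := lead_lt_of_lt α 1 m (by omega) h
      rw [binUp_succ 0 α (by omega)]
      rw [binUp_zero']
      simp only [show (0:ℕ)+1 = 1 from rfl, show (0:ℕ)+2 = 2 from rfl]
      have pasc2 : Nat.choose (lead α 1 + 2) 2
          = Nat.choose (lead α 1 + 1) 1 + Nat.choose (lead α 1 + 1) 2 :=
        Nat.choose_succ_succ _ _
      have mono : Nat.choose (lead α 1 + 2) 2 ≤ Nat.choose (m+1) 2 :=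
        Nat.choose_le_choose _ (by omega)
      have := Nat.choose_one_right (lead α 1 + 1)
      omega
  | succ i ih =>
    intro α m h
    simp only [show i+1+1 = i+2 from rfl, show i+1+2 = i+3 from rfl] at h ⊢
    rcases Nat.eq_zero_or_pos α with rfl | hα
    · rw [binUp_zero]
      exact Nat.choose_pos (by have := pos_of_choose_pos h; omega)
    · have hL1 : Nat.choose (lead α (i+2)) (i+2) ≤ α := lead_mem α (i+2) (by omega)
      have hL2 : α < Nat.choose (lead α (i+2) + 1) (i+2) := lead_lt α (i+2) (by omega)
      have hLm : lead α (i+2) < m := lead_lt_of_lt α (i+2) m (by omega) h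
      rw [binUp_succ (i+1) α (by omega)]
      simp only [show i+1+1 = i+2 from rfl, show i+1+2 = i+3 from rfl]
      have pasc : Nat.choose (lead α (i+2) + 1) (i+2)
          = Nat.choose (lead α (i+2)) (i+1) + Nat.choose (lead α (i+2)) (i+2) :=
        Nat.choose_succ_succ _ _
      have inner : binUp (i+1) (α - Nat.choose (lead α (i+2)) (i+2))
          < Nat.choose (lead α (i+2) + 1) (i+2) := ih _ _ (by omega)
      have pasc2 : Nat.choose (lead α (i+2) + 2) (i+3)
          = Nat.choose (lead α (i+2) + 1) (i+2) + Nat.choose (lead α (i+2) + 1) (i+3) :=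
        Nat.choose_succ_succ _ _
      have mono : Nat.choose (lead α (i+2) + 2) (i+3) ≤ Nat.choose (m+1) (i+3) :=
        Nat.choose_le_choose _ (by omega)
      omega

lemma binUp_choose_self (i m : ℕ) (him : i + 1 ≤ m) :
    binUp (i+1) (Nat.choose m (i+1)) = Nat.choose (m+1) (i+2) := by
  have hpos : 0 < Nat.choose m (i+1) := Nat.choose_pos him
  have hLm : lead (Nat.choose m (i+1)) (i+1) = m := by
    have h1 : m ≤ lead (Nat.choose m (i+1)) (i+1) :=
      le_csSup (lead_bddAbove _ _ (by omega)) (by simp)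
    have h2 : Nat.choose m (i+1) < Nat.choose (m+1) (i+1) := by
      have pasc : Nat.choose (m+1) (i+1) = Nat.choose m i + Nat.choose m (i+1) :=
        Nat.choose_succ_succ _ _
      have : 0 < Nat.choose m i := Nat.choose_pos (by omega)
      omega
    have h3 := lead_lt_of_lt _ (i+1) (m+1) (by omega) h2
    omega
  rw [binUp_succ i _ (by omega), hLm]
  simp [binUp_zero]

lemma binUp_le (i α m : ℕ) (h : α ≤ Nat.choose m (i+1)) :
    binUp (i+1) α ≤ Nat.choose (m+1) (i+2) := by
  rcases lt_or_eq_of_le h with hlt | rfl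
  · exact (binUp_lt i α m hlt).le
  · rcases le_or_gt (i+1) m with him | him
    · rw [binUp_choose_self i m him]
    · rw [Nat.choose_eq_zero_of_lt him, binUp_zero]
      omega




lemma macaulay_le (f : ℕ → ℕ) (hf : MacaulayFun f) :
    ∀ n, f n ≤ Nat.choose (f 1 + n - 1) n := by
  intro n
  induction n with
  | zero => simp [hf.1]
  | succ n ih =>
    rcases Nat.eq_zero_or_pos n with rfl | hn
    · simp [Nat.choose_one_right]
    · obtain ⟨k, rfl⟩ := Nat.exists_eq_add_of_le hn
      have h1 : f (1 + k + 1) ≤ binUp (1 + k) (f (1 + k)) := hf.2 _ (by omega)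
      have h2 : binUp (1 + k) (f (1 + k)) ≤ Nat.choose (f 1 + (1 + k) - 1 + 1) (1 + k + 1) := by
        have := binUp_le k (f (1 + k)) (f 1 + (1 + k) - 1) (by
          have e : k + 1 = 1 + k := by omega
          rw [e]; exact ih)
        have e : k + 1 = 1 + k := by omega
        rw [e] at this
        have e3 : 1 + k + 1 = k + 2 := by omega
        rw [e3]
        exact this
      have e2 : f 1 + (1 + k) - 1 + 1 = f 1 + (1 + k + 1) - 1 := by omega
      rw [e2] at h2
      exact le_trans h1 h2

lemma s0M_le (f : ℕ → ℕ) (n : ℕ) (h : f n < Nat.choose (f 1 + n - 1) n) :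
    s0M f ≤ (n : ℕ∞) :=
  sInf_le ⟨n, rfl, h⟩

lemma supN_spec (f : ℕ → ℕ) (hf : (Function.support f).Finite) (m : ℕ) (hm : f m ≠ 0) :
    m ≤ supN f :=
  le_csSup hf.bddAbove hm

lemma supN_succ_zero (f : ℕ → ℕ) (hf : (Function.support f).Finite) (m : ℕ)
    (hm : supN f < m) : f m = 0 := by
  by_contra hc
  exact absurd (supN_spec f hf m hc) (by omega)

lemma pascal_c (a n : ℕ) (ha : 1 ≤ a) :
    Nat.choose (a - 1 + (n+1) - 1) (n+1) + Nat.choose (a + n - 1) n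
      = Nat.choose (a + (n+1) - 1) (n+1) := by
  obtain ⟨b, rfl⟩ := Nat.exists_eq_add_of_le ha
  have e1 : 1 + b - 1 + (n+1) - 1 = b + n := by omega
  have e2 : 1 + b + n - 1 = b + n := by omega
  have e3 : 1 + b + (n+1) - 1 = b + n + 1 := by omega
  rw [e1, e2, e3]
  have hp : Nat.choose (b+n+1) (n+1) = Nat.choose (b+n) n + Nat.choose (b+n) (n+1) :=
    Nat.choose_succ_succ _ _
  omega

lemma chainB (a r : ℕ) (ha : 1 < a) (hr : 1 ≤ r) (H : ℕ → ℕ → ℕ)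
    (htypeH : ∀ i < r, H i 1 = a - 1)
    (hgapH : ∀ i, 1 ≤ i → i ≤ r →
      s0M (H (i - 1)) = ⊤ ∨
        ((Function.support (H i)).Finite ∧
          (supN (H i) : ℕ∞) + 1 < s0M (H (i - 1))))
    (s : ℕ) (hs : H 0 s < Nat.choose (a - 1 + s - 1) s) :
    ∀ i, 1 ≤ i → i ≤ r → (Function.support (H i)).Finite ∧ supN (H i) + i < s := by
  have hs0 : s0M (H 0) ≤ (s : ℕ∞) := by
    apply s0M_le
    rw [htypeH 0 hr]
    exact hs
  intro i hi1
  induction i, hi1 using Nat.le_induction with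
  | base =>
    intro hir
    rcases hgapH 1 (by omega) hir with heq | ⟨hfin, hlt⟩
    · rw [heq, top_le_iff] at hs0
      exact absurd hs0 (ENat.coe_ne_top s)
    · simp only [show (1:ℕ) - 1 = 0 from rfl] at hlt
      have hlt2 : ((supN (H 1) + 1 : ℕ) : ℕ∞) < (s : ℕ∞) := by
        push_cast
        exact lt_of_lt_of_le hlt hs0
      have : supN (H 1) + 1 < s := by exact_mod_cast hlt2
      exact ⟨hfin, by omega⟩
  | succ i hi ih =>
    intro hir
    obtain ⟨hfin_i, hlt_i⟩ := ih (by omega)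
    have hz : H i (supN (H i) + 1) = 0 := supN_succ_zero _ hfin_i _ (by omega)
    have hbound : s0M (H i) ≤ ((supN (H i) + 1 : ℕ) : ℕ∞) := by
      apply s0M_le
      rw [hz, htypeH i (by omega)]
      exact Nat.choose_pos (by omega)
    rcases hgapH (i+1) (by omega) hir with heq | ⟨hfin1, hlt1⟩
    · rw [show i + 1 - 1 = i from rfl] at heq
      rw [heq, top_le_iff] at hbound
      exact absurd hbound (ENat.coe_ne_top _)
    · rw [show i + 1 - 1 = i from rfl] at hlt1
      have hlt2 : ((supN (H (i+1)) + 1 : ℕ) : ℕ∞) < ((supN (H i) + 1 : ℕ) : ℕ∞) := by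
        push_cast
        exact lt_of_lt_of_le hlt1 hbound
      have : supN (H (i+1)) + 1 < supN (H i) + 1 := by exact_mod_cast hlt2
      exact ⟨hfin1, by omega⟩

lemma H0_le (r : ℕ) (H : ℕ → ℕ → ℕ) (h : ℕ → ℕ)
    (hdecH : ∀ n, h n = ∑ i ∈ Finset.range (r + 1),
      if i ≤ n then H i (n - i) else 0) :
    ∀ n, H 0 n ≤ h n := by
  intro n
  rw [hdecH n]
  have := Finset.single_le_sum (f := fun i => if i ≤ n then H i (n - i) else 0)
    (fun i _ => Nat.zero_le _) (Finset.mem_range.mpr (by omega : 0 < r + 1))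
  simpa using this

lemma decomp_beyond (r : ℕ) (H : ℕ → ℕ → ℕ) (h : ℕ → ℕ)
    (hdecH : ∀ n, h n = ∑ i ∈ Finset.range (r + 1),
      if i ≤ n then H i (n - i) else 0)
    (s : ℕ)
    (hchain : ∀ i, 1 ≤ i → i ≤ r → (Function.support (H i)).Finite ∧ supN (H i) + i < s) :
    ∀ n, s ≤ n → h n = H 0 n := by
  intro n hn
  rw [hdecH n]
  rw [Finset.sum_eq_single_of_mem 0 (Finset.mem_range.mpr (by omega))]
  · simp
  · intro i hi hne
    simp only [Finset.mem_range] at hi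
    split_ifs with hcond
    · obtain ⟨hfin, hlt⟩ := hchain i (by omega) (by omega)
      exact supN_succ_zero _ hfin _ (by omega)
    · rfl

lemma head_formula (a r : ℕ) (ha : 1 < a) (hr : 1 ≤ r) (H : ℕ → ℕ → ℕ) (h : ℕ → ℕ)
    (hMH : ∀ i ≤ r, MacaulayFun (H i))
    (htypeH : ∀ i < r, H i 1 = a - 1)
    (hgapH : ∀ i, 1 ≤ i → i ≤ r →
      s0M (H (i - 1)) = ⊤ ∨
        ((Function.support (H i)).Finite ∧
          (supN (H i) : ℕ∞) + 1 < s0M (H (i - 1))))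
    (hdecH : ∀ n, h n = ∑ i ∈ Finset.range (r + 1),
      if i ≤ n then H i (n - i) else 0) :
    ∀ n, H 0 n = min (h n) (Nat.choose (a - 1 + n - 1) n) := by
  have hf1 : ∀ n, H 0 n ≤ Nat.choose (a - 1 + n - 1) n := by
    intro n
    have := macaulay_le (H 0) (hMH 0 (by omega)) n
    rwa [htypeH 0 hr] at this
  have hle : ∀ n, H 0 n ≤ h n := H0_le r H h hdecH
  by_cases hex : ∃ m, H 0 m < Nat.choose (a - 1 + m - 1) m
  · have hs' := Nat.find_spec hex
    have hchain := chainB a r ha hr H htypeH hgapH (Nat.find hex) hs'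
    have hbeyond := decomp_beyond r H h hdecH (Nat.find hex) hchain
    intro n
    rcases lt_or_ge n (Nat.find hex) with hns | hns
    · have h1 : ¬ (H 0 n < Nat.choose (a - 1 + n - 1) n) := Nat.find_min hex hns
      have h2 := hf1 n
      have h3 := hle n
      omega
    · have h2 : h n = H 0 n := hbeyond n hns
      have h3 := hf1 n
      omega
  · push_neg at hex
    intro n
    have h1 := hex n
    have h2 := hf1 n
    have h3 := hle n
    omega

lemma dec1_at_one (a r' : ℕ) (h₁ : ℕ → ℕ) (G : ℕ → ℕ → ℕ) (hr2 : 2 ≤ r')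
    (hM2 : G 2 0 = 1) (ht1 : G 1 1 = a - 1)
    (hdec : h₁ 1 = ∑ i ∈ Finset.range r', if i ≤ 1 then G (i+1) (1-i) else 0) :
    h₁ 1 = a - 1 + 1 := by
  rw [hdec]
  rw [← Finset.sum_subset (Finset.range_subset_range.mpr hr2) (by
    intro x hx hnx
    simp only [Finset.mem_range] at hnx
    rw [if_neg (by omega)])]
  rw [Finset.sum_range_succ, Finset.sum_range_one]
  simp [ht1, hM2]

lemma key : ∀ r a : ℕ, 1 < a → ∀ h : ℕ → ℕ,
    (∃ n, h n ≠ Nat.choose (a + n - 1) n) →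
    ∀ r' : ℕ, 1 ≤ r → 1 ≤ r' → ∀ H G : ℕ → ℕ → ℕ,
    (∀ i ≤ r, MacaulayFun (H i)) →
    (∀ i < r, H i 1 = a - 1) →
    H r 1 ≤ a - 1 →
    (∀ i, 1 ≤ i → i ≤ r → s0M (H (i - 1)) = ⊤ ∨
      ((Function.support (H i)).Finite ∧ (supN (H i) : ℕ∞) + 1 < s0M (H (i - 1)))) →
    (∀ i ≤ r', MacaulayFun (G i)) →
    (∀ i < r', G i 1 = a - 1) →
    G r' 1 ≤ a - 1 →
    (∀ i, 1 ≤ i → i ≤ r' → s0M (G (i - 1)) = ⊤ ∨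
      ((Function.support (G i)).Finite ∧ (supN (G i) : ℕ∞) + 1 < s0M (G (i - 1)))) →
    (∀ n, h n = ∑ i ∈ Finset.range (r + 1), if i ≤ n then H i (n - i) else 0) →
    (∀ n, h n = ∑ i ∈ Finset.range (r' + 1), if i ≤ n then G i (n - i) else 0) →
    r = r' ∧ ∀ i ≤ r, ∀ n, H i n = G i n := by
  intro r
  induction r using Nat.strong_induction_on with
  | _ r IH =>
  intro a ha h hnb r' hr hr' H G hMH htypeH htyperH hgapH hMG htypeG htyperG hgapG hdecH hdecG
  have h0eq : ∀ n, H 0 n = G 0 n := by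
    intro n
    rw [head_formula a r ha hr H h hMH htypeH hgapH hdecH n,
        head_formula a r' ha hr' G h hMG htypeG hgapG hdecG n]
  have hH0le := H0_le r H h hdecH
  have hdec1H : ∀ n, h (n+1) - H 0 (n+1)
      = ∑ i ∈ Finset.range r, if i ≤ n then H (i+1) (n - i) else 0 := by
    intro n
    have hd := hdecH (n+1)
    rw [Finset.sum_range_succ'] at hd
    simp only [add_le_add_iff_right, Nat.succ_sub_succ, Nat.sub_zero, Nat.zero_le,
      if_true] at hd
    omega
  have hdec1G : ∀ n, h (n+1) - H 0 (n+1)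
      = ∑ i ∈ Finset.range r', if i ≤ n then G (i+1) (n - i) else 0 := by
    intro n
    have hd := hdecG (n+1)
    rw [Finset.sum_range_succ'] at hd
    simp only [add_le_add_iff_right, Nat.succ_sub_succ, Nat.sub_zero, Nat.zero_le,
      if_true] at hd
    have := h0eq (n+1)
    omega
  have hf1 : ∀ n, H 0 n ≤ Nat.choose (a - 1 + n - 1) n := by
    intro n
    have := macaulay_le (H 0) (hMH 0 (by omega)) n
    rwa [htypeH 0 hr] at this
  have hnb1 : ∃ n, (h (n+1) - H 0 (n+1)) ≠ Nat.choose (a + n - 1) n := by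
    by_cases hex : ∃ m, H 0 m < Nat.choose (a - 1 + m - 1) m
    · obtain ⟨s, hs⟩ := hex
      have hchain := chainB a r ha hr H htypeH hgapH s hs
      refine ⟨s, ?_⟩
      have hz : h (s+1) - H 0 (s+1) = 0 := by
        rw [hdec1H s]
        apply Finset.sum_eq_zero
        intro i hi
        simp only [Finset.mem_range] at hi
        split_ifs with hcond
        · obtain ⟨hfin, hlt⟩ := hchain (i+1) (by omega) (by omega)
          exact supN_succ_zero _ hfin _ (by omega)
        · rfl
      rw [hz]
      have : 0 < Nat.choose (a + s - 1) s := Nat.choose_pos (by omega)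
      omega
    · push_neg at hex
      have hH0c : ∀ n, H 0 n = Nat.choose (a - 1 + n - 1) n :=
        fun n => le_antisymm (hf1 n) (hex n)
      by_contra hcon
      push_neg at hcon
      obtain ⟨n0, hn0⟩ := hnb
      apply hn0
      cases n0 with
      | zero =>
        have hh0 : h 0 = 1 := by
          rw [hdecH 0]
          rw [Finset.sum_eq_single_of_mem 0 (Finset.mem_range.mpr (by omega))]
          · simpa using (hMH 0 (by omega)).1
          · intro i hi hne
            rw [if_neg (by omega)]
        simpa [Nat.choose_zero_right] using hh0
      | succ m =>
        have h1 := hcon m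
        have h2 := hH0c (m+1)
        have h3 := pascal_c a m (by omega)
        have h4 := hH0le (m+1)
        omega
  rcases Nat.lt_or_ge r 2 with hr2 | hr2
  · have hr1 : r = 1 := by omega
    subst hr1
    have hH1 : ∀ n, h (n+1) - H 0 (n+1) = H 1 n := by
      intro n
      rw [hdec1H n]
      simp [Finset.sum_range_one]
    have hr'1 : r' = 1 := by
      by_contra hc
      have hr'2 : 2 ≤ r' := by omega
      have e1 : h (1+1) - H 0 (1+1) = a - 1 + 1 :=
        dec1_at_one a r' (fun n => h (n+1) - H 0 (n+1)) G hr'2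
          ((hMG 2 (by omega)).1) (htypeG 1 (by omega)) (hdec1G 1)
      have e2 := hH1 1
      have e3 : H 1 1 ≤ a - 1 := htyperH
      omega
    subst hr'1
    refine ⟨rfl, ?_⟩
    intro i hi n
    interval_cases i
    · exact h0eq n
    · have e1 := hH1 n
      have e2 : h (n+1) - H 0 (n+1) = G 1 n := by
        rw [hdec1G n]
        simp [Finset.sum_range_one]
      omega
  · have hr'2 : 2 ≤ r' := by
      by_contra hc
      have hr'1 : r' = 1 := by omega
      have e1 : h (1+1) - H 0 (1+1) = a - 1 + 1 :=
        dec1_at_one a r (fun n => h (n+1) - H 0 (n+1)) H hr2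
          ((hMH 2 (by omega)).1) (htypeH 1 (by omega)) (hdec1H 1)
      have e2 : h (1+1) - H 0 (1+1) = G 1 1 := by
        rw [hdec1G 1, hr'1]
        simp [Finset.sum_range_one]
      rw [hr'1] at htyperG
      omega
    obtain ⟨heqr, hall⟩ := IH (r-1) (by omega) a ha (fun n => h (n+1) - H 0 (n+1)) hnb1
      (r'-1) (by omega) (by omega) (fun i => H (i+1)) (fun i => G (i+1))
      (fun i hi => hMH (i+1) (by omega))
      (fun i hi => htypeH (i+1) (by omega))
      (by show H (r - 1 + 1) 1 ≤ a - 1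
          rw [show r - 1 + 1 = r from by omega]; exact htyperH)
      (by
        intro i h1 h2
        show s0M (H (i - 1 + 1)) = ⊤ ∨
          ((Function.support (H (i + 1))).Finite ∧
            (supN (H (i + 1)) : ℕ∞) + 1 < s0M (H (i - 1 + 1)))
        rw [show i - 1 + 1 = i from by omega]
        have := hgapH (i+1) (by omega) (by omega)
        rwa [show i + 1 - 1 = i from rfl] at this)
      (fun i hi => hMG (i+1) (by omega))
      (fun i hi => htypeG (i+1) (by omega))
      (by show G (r' - 1 + 1) 1 ≤ a - 1
          rw [show r' - 1 + 1 = r' from by omega]; exact htyperG)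
      (by
        intro i h1 h2
        show s0M (G (i - 1 + 1)) = ⊤ ∨
          ((Function.support (G (i + 1))).Finite ∧
            (supN (G (i + 1)) : ℕ∞) + 1 < s0M (G (i - 1 + 1)))
        rw [show i - 1 + 1 = i from by omega]
        have := hgapG (i+1) (by omega) (by omega)
        rwa [show i + 1 - 1 = i from rfl] at this)
      (by
        intro n
        rw [show r - 1 + 1 = r from by omega]
        exact hdec1H n)
      (by
        intro n
        rw [show r' - 1 + 1 = r' from by omega]
        exact hdec1G n)
    refine ⟨by omega, ?_⟩
    intro i hi n
    cases i with
    | zero => exact h0eq n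
    | succ j => exact hall j (by omega) n


/-- Theorem 2.20, uniqueness: two decompositions
`h = h₀ + h₁[-1] + ⋯ + h_r[-r] = g₀ + g₁[-1] + ⋯ + g_{r'}[-r']` of a
non-binomial function `h` satisfying the type and gap conditions coincide:
`r = r'` and `hᵢ = gᵢ` for all `i`. -/
theorem macaulay_decomposition_unique (a : ℕ) (ha : 1 < a) (h : ℕ → ℕ)
    (hnb : ∃ n, h n ≠ Nat.choose (a + n - 1) n)
    (r r' : ℕ) (hr : 1 ≤ r) (hr' : 1 ≤ r')
    (H G : ℕ → ℕ → ℕ)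
    (hMH : ∀ i ≤ r, MacaulayFun (H i))
    (htypeH : ∀ i < r, H i 1 = a - 1) (htyperH : H r 1 ≤ a - 1)
    (hgapH : ∀ i, 1 ≤ i → i ≤ r →
      s0M (H (i - 1)) = ⊤ ∨
        ((Function.support (H i)).Finite ∧
          (supN (H i) : ℕ∞) + 1 < s0M (H (i - 1))))
    (hMG : ∀ i ≤ r', MacaulayFun (G i))
    (htypeG : ∀ i < r', G i 1 = a - 1) (htyperG : G r' 1 ≤ a - 1)
    (hgapG : ∀ i, 1 ≤ i → i ≤ r' →
      s0M (G (i - 1)) = ⊤ ∨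
        ((Function.support (G i)).Finite ∧
          (supN (G i) : ℕ∞) + 1 < s0M (G (i - 1))))
    (hdecH : ∀ n, h n = ∑ i ∈ Finset.range (r + 1),
      if i ≤ n then H i (n - i) else 0)
    (hdecG : ∀ n, h n = ∑ i ∈ Finset.range (r' + 1),
      if i ≤ n then G i (n - i) else 0) :
    r = r' ∧ ∀ i ≤ r, ∀ n, H i n = G i n := by
  exact key r a ha h hnb r' hr hr' H G hMH htypeH htyperH hgapH hMG htypeG htyperG hgapG hdecH hdecG
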